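/- arXiv:math/0409237 — 3 statements merged into one kernel-verified Lean document; each statement's English description precedes it below -/
import Mathlib

section
/- Let B : ∏ⱼ Fin aⱼ → 𝕂 be any Δ-independent table over a field 𝕂 whose total sum of entries equals 1. Define B^I(i₁,…,iₙ) = ∏ⱼ m_j(iⱼ), where m_j is the 1-dimensional margin of B in coordinate j, and B⁰ = B − B^I. Then B^I is completely independent and for every J ∈ Δ the J-margin of B⁰ is identically 0. -/
open Finset

/-- The `J`-margin of an `n`-dimensional table over a field: sum over all coordinates
not in `J`. -/
noncomputable def margin (𝕂 : Type*) [Field 𝕂] {n : ℕ} {a : Fin n → ℕ}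
    (A : (∀ j, Fin (a j)) → 𝕂) (J : Finset (Fin n)) (i : ∀ j, Fin (a j)) : 𝕂 :=
  ∑ k ∈ univ.filter (fun k : ∀ j, Fin (a j) => ∀ j ∈ J, k j = i j), A k

private lemma margin_univ {𝕂 : Type*} [Field 𝕂] {n : ℕ} {a : Fin n → ℕ}
    (A : (∀ j, Fin (a j)) → 𝕂) (i : ∀ j, Fin (a j)) :
    margin 𝕂 A univ i = A i := by
  unfold margin
  have h : univ.filter (fun k : ∀ j, Fin (a j) => ∀ j ∈ (univ : Finset (Fin n)), k j = i j)
      = {i} := by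
    ext k
    simp [funext_iff]
  rw [h, Finset.sum_singleton]

private lemma margin_empty {𝕂 : Type*} [Field 𝕂] {n : ℕ} {a : Fin n → ℕ}
    (A : (∀ j, Fin (a j)) → 𝕂) (i : ∀ j, Fin (a j)) :
    margin 𝕂 A ∅ i = ∑ k, A k := by
  unfold margin
  simp

private lemma margin_peel {𝕂 : Type*} [Field 𝕂] {n : ℕ} {a : Fin n → ℕ}
    (A : (∀ j, Fin (a j)) → 𝕂) (J' : Finset (Fin n)) (j : Fin n) (hj : j ∉ J')
    (i : ∀ j, Fin (a j)) :
    margin 𝕂 A J' i = ∑ v : Fin (a j), margin 𝕂 A (insert j J') (Function.update i j v) := by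
  unfold margin
  rw [← Finset.sum_fiberwise_of_maps_to (g := fun k : ∀ j, Fin (a j) => k j)
    (t := (univ : Finset (Fin (a j)))) (fun x _ => mem_univ _)]
  refine Finset.sum_congr rfl fun v _ => ?_
  refine Finset.sum_congr ?_ fun _ _ => rfl
  rw [Finset.filter_filter]
  apply Finset.filter_congr
  intro k _
  simp only [Finset.mem_insert]
  constructor
  · rintro ⟨h1, h2⟩ j' hj'
    rcases hj' with rfl | hj'
    · simp [h2]
    · have : j' ≠ j := fun h => hj (h ▸ hj')
      rw [Function.update_of_ne this]
      exact h1 j' hj'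
  · intro h
    constructor
    · intro j' hj'
      have hne : j' ≠ j := fun h => hj (h ▸ hj')
      have := h j' (Or.inr hj')
      rwa [Function.update_of_ne hne] at this
    · have := h j (Or.inl rfl)
      rwa [Function.update_self] at this

private lemma margin_sdiff {𝕂 : Type*} [Field 𝕂] {n : ℕ} {a : Fin n → ℕ}
    (A : (∀ j, Fin (a j)) → 𝕂) (J : Finset (Fin n)) (y : ∀ j, Fin (a j) → 𝕂)
    (hy : ∀ i, margin 𝕂 A J i = ∏ j ∈ J, y j (i j)) :
    ∀ D : Finset (Fin n), D ⊆ J → ∀ i,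
      margin 𝕂 A (J \ D) i = (∏ j ∈ J \ D, y j (i j)) * ∏ j ∈ D, (∑ v, y j v) := by
  intro D
  induction D using Finset.induction_on with
  | empty => intro _ i; simp [hy i]
  | @insert j D hj ih =>
    intro hsub i
    have hjJ : j ∈ J := hsub (mem_insert_self j D)
    have hDJ : D ⊆ J := fun x hx => hsub (mem_insert_of_mem hx)
    have hjJD : j ∈ J \ D := mem_sdiff.2 ⟨hjJ, hj⟩
    have h1 : J \ insert j D = (J \ D).erase j := by
      ext x; simp [mem_sdiff, mem_erase, and_comm, and_assoc]; tauto
    have h2 : insert j (J \ insert j D) = J \ D := by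
      rw [h1, Finset.insert_erase hjJD]
    have hjnot : j ∉ J \ insert j D := by rw [h1]; exact notMem_erase _ _
    rw [margin_peel A (J \ insert j D) j hjnot i]
    have step : ∀ v : Fin (a j),
        margin 𝕂 A (insert j (J \ insert j D)) (Function.update i j v)
          = y j v * ((∏ j' ∈ (J \ D).erase j, y j' (i j')) * ∏ j' ∈ D, (∑ v, y j' v)) := by
      intro v
      rw [h2, ih hDJ (Function.update i j v)]
      have : ∏ j' ∈ J \ D, y j' (Function.update i j v j')
          = y j v * ∏ j' ∈ (J \ D).erase j, y j' (i j') := by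
        rw [← Finset.mul_prod_erase _ _ hjJD, Function.update_self]
        congr 1
        refine Finset.prod_congr rfl fun j' hj' => ?_
        rw [Function.update_of_ne (Finset.ne_of_mem_erase hj')]
      rw [this, mul_assoc]
    rw [Finset.sum_congr rfl fun v _ => step v, ← Finset.sum_mul,
      Finset.prod_insert hj, h1]
    ring

/-- If `B` is a `Δ`-independent table with total sum `1` over a field `𝕂`, and
`Bᴵ i = ∏ⱼ mⱼ(iⱼ)` is the product of the 1-dimensional margins of `B`, then `Bᴵ` is
completely independent and every `Δ`-margin of `B⁰ = B - Bᴵ` is identically zero. -/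
theorem delta_independent_decomposition (𝕂 : Type*) [Field 𝕂] {n : ℕ} {a : Fin n → ℕ}
    (Δ : Set (Finset (Fin n))) (hΔ : ∀ J ∈ Δ, ∀ J' ⊆ J, J' ∈ Δ)
    (B : (∀ j, Fin (a j)) → 𝕂)
    (hB : ∀ J ∈ Δ, ∃ y : ∀ j, Fin (a j) → 𝕂, ∀ i, margin 𝕂 B J i = ∏ j ∈ J, y j (i j))
    (hsum : ∑ i, B i = 1)
    (BI : (∀ j, Fin (a j)) → 𝕂) (hBI : ∀ i, BI i = ∏ j, margin 𝕂 B {j} i) :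
    (∃ y : ∀ j, Fin (a j) → 𝕂, ∀ i, BI i = ∏ j, y j (i j)) ∧
    (∀ J ∈ Δ, ∀ i, margin 𝕂 (fun k => B k - BI k) J i = 0) := by
  classical
  -- the index type is nonempty
  have hne : Nonempty (∀ j, Fin (a j)) := by
    by_contra h
    rw [not_nonempty_iff] at h
    rw [Finset.univ_eq_empty, Finset.sum_empty] at hsum
    exact one_ne_zero hsum.symm
  obtain ⟨i₀⟩ := hne
  -- the 1-dimensional margins as univariate functions
  set yI : ∀ j, Fin (a j) → 𝕂 :=
    fun j v => ∑ k ∈ univ.filter (fun k : ∀ j, Fin (a j) => k j = v), B k with hyI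
  have hkey : ∀ (j : Fin n) (i : ∀ j, Fin (a j)), margin 𝕂 B {j} i = yI j (i j) := by
    intro j i
    unfold margin
    simp [hyI]
  have hBIy : ∀ i, BI i = ∏ j, yI j (i j) := by
    intro i
    rw [hBI i]
    exact Finset.prod_congr rfl fun j _ => hkey j i
  have hyIsum : ∀ j, (∑ v, yI j v) = 1 := by
    intro j
    rw [hyI]
    rw [Finset.sum_fiberwise_of_maps_to (g := fun k : ∀ j, Fin (a j) => k j)
      (t := (univ : Finset (Fin (a j)))) (fun x _ => mem_univ _)]
    exact hsum
  refine ⟨⟨yI, hBIy⟩, ?_⟩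
  intro J hJ i
  -- margin of a difference
  have hdiff : margin 𝕂 (fun k => B k - BI k) J i = margin 𝕂 B J i - margin 𝕂 BI J i := by
    unfold margin
    rw [Finset.sum_sub_distrib]
  rw [hdiff]
  -- margin of BI over J
  have hBIuniv : ∀ i, margin 𝕂 BI univ i = ∏ j ∈ univ, yI j (i j) := by
    intro i; rw [margin_univ, hBIy i]
  have hBImarg : margin 𝕂 BI J i = ∏ j ∈ J, yI j (i j) := by
    have := margin_sdiff BI univ yI hBIuniv (univ \ J) (Finset.sdiff_subset) i
    rw [Finset.sdiff_sdiff_eq_self (Finset.subset_univ J)] at this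
    rw [this]
    have : ∏ j ∈ univ \ J, (∑ v, yI j v) = 1 :=
      Finset.prod_eq_one fun j _ => hyIsum j
    rw [this, mul_one]
  -- margin of B over J
  obtain ⟨y, hy⟩ := hB J hJ
  set S : Fin n → 𝕂 := fun j => ∑ v, y j v with hS
  have hprodS : ∏ j ∈ J, S j = 1 := by
    have := margin_sdiff B J y hy J (le_refl J) i₀
    rw [Finset.sdiff_self, margin_empty, hsum, Finset.prod_empty, one_mul] at this
    exact this.symm
  have hsingle : ∀ j ∈ J, yI j (i j) = y j (i j) * ∏ j' ∈ J.erase j, S j' := by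
    intro j hj
    have := margin_sdiff B J y hy (J.erase j) (Finset.erase_subset _ _) i
    rw [Finset.sdiff_erase_self hj, Finset.prod_singleton] at this
    rw [← hkey j i, this]
  have hBmarg : margin 𝕂 B J i = ∏ j ∈ J, yI j (i j) := by
    rw [hy i]
    rw [Finset.prod_congr rfl hsingle, Finset.prod_mul_distrib]
    have hswap : ∏ j ∈ J, ∏ j' ∈ J.erase j, S j' = ∏ j' ∈ J, S j' ^ (J.card - 1) := by
      rw [Finset.prod_comm' (s := J) (t := fun j => J.erase j) (t' := J)
        (s' := fun j' => J.erase j') (fun x y => by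
          simp only [Finset.mem_erase]
          constructor
          · rintro ⟨h1, h2, h3⟩; exact ⟨⟨fun h => h2 h.symm, h1⟩, h3⟩
          · rintro ⟨⟨h1, h2⟩, h3⟩; exact ⟨h2, fun h => h1 h.symm, h3⟩)]
      refine Finset.prod_congr rfl fun j' hj' => ?_
      rw [Finset.prod_const, Finset.card_erase_of_mem hj']
    rw [hswap, Finset.prod_pow, hprodS, one_pow, mul_one]
  rw [hBmarg, hBImarg, sub_self]
end

section
/- Let 𝕂 be a field and consider 2×2×2 tables B : Fin 2 × Fin 2 × Fin 2 → 𝕂. Suppose all three 2-margins B_{12}, B_{13}, B_{23} (each a 2×2 matrix obtained by summing out one coordinate) have vanishing determinant, and the total sum of entries of B is nonzero. Then B can be written as B^I + B⁰ where B^I(i,j,k) = m₁(i)m₂(j)m₃(k)/s² (with m_r the 1-margins and s the total sum) and all three 2-margins of B⁰ are identically zero. -/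
open Finset

set_option linter.unreachableTactic false
set_option linter.unusedTactic false

set_option maxHeartbeats 2000000 in
/-- A 2×2×2 table over a field whose three 2-margins have vanishing determinant and whose
total sum is nonzero decomposes as `Bᴵ + B⁰`, where `Bᴵ i j k = m₁ i * m₂ j * m₃ k / s²`
and every 2-margin of `B⁰` vanishes. -/
theorem two_cube_decomposition (𝕂 : Type*) [Field 𝕂] (B : Fin 2 → Fin 2 → Fin 2 → 𝕂)
    (h12 : (∑ k, B 0 0 k) * (∑ k, B 1 1 k) = (∑ k, B 0 1 k) * (∑ k, B 1 0 k))
    (h13 : (∑ j, B 0 j 0) * (∑ j, B 1 j 1) = (∑ j, B 0 j 1) * (∑ j, B 1 j 0))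
    (h23 : (∑ i, B i 0 0) * (∑ i, B i 1 1) = (∑ i, B i 0 1) * (∑ i, B i 1 0))
    (hs : (∑ i, ∑ j, ∑ k, B i j k) ≠ 0) :
    ∃ B0 : Fin 2 → Fin 2 → Fin 2 → 𝕂,
      (∀ i j k, B i j k =
          (∑ j', ∑ k', B i j' k') * (∑ i', ∑ k', B i' j k') * (∑ i', ∑ j', B i' j' k)
            / (∑ i', ∑ j', ∑ k', B i' j' k') ^ 2
          + B0 i j k) ∧
      (∀ i j, ∑ k, B0 i j k = 0) ∧
      (∀ i k, ∑ j, B0 i j k = 0) ∧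
      (∀ j k, ∑ i, B0 i j k = 0) := by
  simp only [Fin.sum_univ_two] at h12 h13 h23 hs
  refine ⟨fun i j k => B i j k -
    (∑ j', ∑ k', B i j' k') * (∑ i', ∑ k', B i' j k') * (∑ i', ∑ j', B i' j' k)
      / (∑ i', ∑ j', ∑ k', B i' j' k') ^ 2, fun i j k => by ring, ?_, ?_, ?_⟩ <;>
  [ (intro i j; fin_cases i <;> fin_cases j);
    (intro i k; fin_cases i <;> fin_cases k);
    (intro j k; fin_cases j <;> fin_cases k)] <;>
    simp only [Fin.sum_univ_two, Fin.isValue, Fin.zero_eta, Fin.mk_one] <;> field_simp <;>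
    (try first
      | linear_combination (B 0 0 0 + B 0 0 1 + B 0 1 0 + B 0 1 1 + B 1 0 0 + B 1 0 1 + B 1 1 0 + B 1 1 1) * h12
      | linear_combination (-(B 0 0 0 + B 0 0 1 + B 0 1 0 + B 0 1 1 + B 1 0 0 + B 1 0 1 + B 1 1 0 + B 1 1 1)) * h12
      | linear_combination (2*(B 0 0 0 + B 0 0 1 + B 0 1 0 + B 0 1 1 + B 1 0 0 + B 1 0 1 + B 1 1 0 + B 1 1 1)) * h12
      | linear_combination (-2*(B 0 0 0 + B 0 0 1 + B 0 1 0 + B 0 1 1 + B 1 0 0 + B 1 0 1 + B 1 1 0 + B 1 1 1)) * h12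
      | linear_combination (B 0 0 0 + B 0 0 1 + B 0 1 0 + B 0 1 1 + B 1 0 0 + B 1 0 1 + B 1 1 0 + B 1 1 1) * h13
      | linear_combination (-(B 0 0 0 + B 0 0 1 + B 0 1 0 + B 0 1 1 + B 1 0 0 + B 1 0 1 + B 1 1 0 + B 1 1 1)) * h13
      | linear_combination (2*(B 0 0 0 + B 0 0 1 + B 0 1 0 + B 0 1 1 + B 1 0 0 + B 1 0 1 + B 1 1 0 + B 1 1 1)) * h13
      | linear_combination (-2*(B 0 0 0 + B 0 0 1 + B 0 1 0 + B 0 1 1 + B 1 0 0 + B 1 0 1 + B 1 1 0 + B 1 1 1)) * h13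
      | linear_combination (B 0 0 0 + B 0 0 1 + B 0 1 0 + B 0 1 1 + B 1 0 0 + B 1 0 1 + B 1 1 0 + B 1 1 1) * h23
      | linear_combination (-(B 0 0 0 + B 0 0 1 + B 0 1 0 + B 0 1 1 + B 1 0 0 + B 1 0 1 + B 1 1 0 + B 1 1 1)) * h23
      | linear_combination (2*(B 0 0 0 + B 0 0 1 + B 0 1 0 + B 0 1 1 + B 1 0 0 + B 1 0 1 + B 1 1 0 + B 1 1 1)) * h23
      | linear_combination (-2*(B 0 0 0 + B 0 0 1 + B 0 1 0 + B 0 1 1 + B 1 0 0 + B 1 0 1 + B 1 1 0 + B 1 1 1)) * h23)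
end

section
/- Let 𝕂 be an algebraically closed field and let R, S be finitely generated 𝕂-algebras that are integral domains. Then R ⊗_𝕂 S is an integral domain. -/
open TensorProduct

/-- Over an algebraically closed field, the tensor product of two finitely generated
integral domains is an integral domain. -/
theorem tensorProduct_isDomain (𝕂 : Type*) [Field 𝕂] [IsAlgClosed 𝕂]
    (R S : Type*) [CommRing R] [CommRing S] [Algebra 𝕂 R] [Algebra 𝕂 S]
    [IsDomain R] [IsDomain S]
    (hR : Algebra.FiniteType 𝕂 R) (hS : Algebra.FiniteType 𝕂 S) :
    IsDomain (R ⊗[𝕂] S) := by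
  classical
  haveI hjacR : IsJacobsonRing R := isJacobsonRing_of_finiteType (A := 𝕂)
  let b := Module.Basis.ofVectorSpace 𝕂 S
  let B : Module.Basis _ R (R ⊗[𝕂] S) := Algebra.TensorProduct.basis R b
  -- the evaluation map attached to a `𝕂`-point of `R`
  let ψ : (R →ₐ[𝕂] 𝕂) → (R ⊗[𝕂] S →ₐ[𝕂] S) := fun φ =>
    (Algebra.TensorProduct.lid 𝕂 S).toAlgHom.comp
      (Algebra.TensorProduct.map φ (AlgHom.id 𝕂 S))
  have key : ∀ (φ : R →ₐ[𝕂] 𝕂) (z : R ⊗[𝕂] S) i,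
      b.repr (ψ φ z) i = φ (B.repr z i) := by
    intro φ z i
    induction z using TensorProduct.induction_on with
    | zero => simp
    | tmul a s =>
        simp only [ψ, B, Algebra.TensorProduct.basis_repr_tmul, AlgHom.coe_comp,
          AlgEquiv.toAlgHom_eq_coe, AlgHom.coe_coe, AlgEquiv.coe_algHom, Function.comp_apply,
          Algebra.TensorProduct.map_tmul, AlgHom.coe_id, id_eq,
          Algebra.TensorProduct.lid_tmul, map_smul, Finsupp.smul_apply,
          Finsupp.mapRange_apply, smul_eq_mul, map_mul, AlgHom.commutes,
          Algebra.algebraMap_self, RingHom.id_apply]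
    | add x y hx hy => simp [map_add, hx, hy]
  -- every maximal ideal gives a 𝕂-point
  have hpoint : ∀ (m : Ideal R), m.IsMaximal → ∃ φ : R →ₐ[𝕂] 𝕂, ∀ x, φ x = 0 → x ∈ m := by
    intro m hm
    haveI := hm
    haveI : Algebra.FiniteType 𝕂 (R ⧸ m) :=
      Algebra.FiniteType.of_surjective (Ideal.Quotient.mkₐ 𝕂 m)
        (Ideal.Quotient.mkₐ_surjective 𝕂 m)
    haveI : Module.Finite 𝕂 (R ⧸ m) := by
      letI : Field (R ⧸ m) := Ideal.Quotient.field m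
      exact finite_of_finite_type_of_isJacobsonRing 𝕂 (R ⧸ m)
    haveI : Algebra.IsIntegral 𝕂 (R ⧸ m) := Algebra.IsIntegral.of_finite 𝕂 (R ⧸ m)
    have hsurj : Function.Surjective (algebraMap 𝕂 (R ⧸ m)) :=
      IsAlgClosed.algebraMap_bijective_of_isIntegral.2
    have hinj : Function.Injective (algebraMap 𝕂 (R ⧸ m)) :=
      (algebraMap 𝕂 (R ⧸ m)).injective
    have hbij : Function.Bijective (Algebra.ofId 𝕂 (R ⧸ m)) := ⟨hinj, hsurj⟩
    let e := AlgEquiv.ofBijective (Algebra.ofId 𝕂 (R ⧸ m)) hbij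
    refine ⟨e.symm.toAlgHom.comp (Ideal.Quotient.mkₐ 𝕂 m), fun x hx => ?_⟩
    have h0 : Ideal.Quotient.mk m x = 0 := by
      have := congrArg e hx
      simpa using this
    exact Ideal.Quotient.eq_zero_iff_mem.mp h0
  have main : ∀ z w : R ⊗[𝕂] S, z * w = 0 → z = 0 ∨ w = 0 := by
    intro z w hzw
    set I := Ideal.span (Set.range fun i => B.repr z i) with hI
    set J := Ideal.span (Set.range fun i => B.repr w i) with hJ
    have hmax : ∀ m : Ideal R, m.IsMaximal → I * J ≤ m := by
      intro m hm
      obtain ⟨φ, hφ⟩ := hpoint m hm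
      have h0 : ψ φ z * ψ φ w = 0 := by rw [← map_mul, hzw, map_zero]
      rcases mul_eq_zero.mp h0 with h | h
      · refine le_trans Ideal.mul_le_left ?_
        rw [hI, Ideal.span_le]
        rintro _ ⟨i, rfl⟩
        refine hφ _ ?_
        rw [← key φ z i, h]
        simp
      · refine le_trans Ideal.mul_le_right ?_
        rw [hJ, Ideal.span_le]
        rintro _ ⟨i, rfl⟩
        refine hφ _ ?_
        rw [← key φ w i, h]
        simp
    have hIJbot : I * J ≤ ⊥ := by
      have h1 : I * J ≤ Ideal.jacobson ⊥ :=
        le_sInf fun m hm => hmax m hm.2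
      have hrad : (⊥ : Ideal R).radical = ⊥ := nilradical_eq_zero R
      rwa [← Ideal.radical_eq_jacobson, hrad] at h1
    rcases (Ideal.bot_prime.mul_le).mp hIJbot with h | h
    · left
      have hz : ∀ i, B.repr z i = 0 := fun i => by
        simpa using h (Ideal.subset_span ⟨i, rfl⟩)
      have : B.repr z = 0 := Finsupp.ext hz
      simpa using B.repr.map_eq_zero_iff.mp this
    · right
      have hw : ∀ i, B.repr w i = 0 := fun i => by
        simpa using h (Ideal.subset_span ⟨i, rfl⟩)
      have : B.repr w = 0 := Finsupp.ext hw
      simpa using B.repr.map_eq_zero_iff.mp this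
  haveI : Nonempty (Module.Basis.ofVectorSpaceIndex 𝕂 S) := b.index_nonempty
  haveI : Nontrivial (R ⊗[𝕂] S) := B.repr.toEquiv.nontrivial
  haveI : NoZeroDivisors (R ⊗[𝕂] S) := ⟨fun h => main _ _ h⟩
  exact NoZeroDivisors.to_isDomain _
end
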